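/- Let A be a nontrivial closed class of decision tables from M_2^∞ and ψ a bounded complexity measure. If the function H^∞_{ψ,A} is everywhere defined, then for every n ∈ ℕ the value G_{ψ,A}(n) is defined and H^∞_{ψ,A}(n) ≥ G_{ψ,A}(n) − 1. -/

import Mathlib

open Classical

noncomputable section

/-- A decision table with many-valued decisions over `E_k = {0,…,k-1}`.
Columns are labeled with attributes `f_i` identified with their indices `i : ℕ`;
a row is a function `ℕ → ℕ` supported on the attribute set, with values `< k`;
each row is labeled with a nonempty finite set of decisions. -/
structure Table (k : ℕ) where
  attrs : Finset ℕ
  rows : Finset (ℕ → ℕ)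
  dec : (ℕ → ℕ) → Finset ℕ
  rows_mem : ∀ r ∈ rows, (∀ i ∈ attrs, r i < k) ∧ (∀ i ∉ attrs, r i = 0)
  dec_nonempty : ∀ r ∈ rows, (dec r).Nonempty

namespace Table

variable {k : ℕ}

/-- a row satisfies a word (a list of (attribute, value) pairs) -/
def rowSat (r : ℕ → ℕ) (α : List (ℕ × ℕ)) : Prop := ∀ q ∈ α, r q.1 = q.2

/-- the word belongs to `Ω_k(T)` -/
def wordOk (T : Table k) (α : List (ℕ × ℕ)) : Prop := ∀ q ∈ α, q.1 ∈ T.attrs ∧ q.2 < k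

/-- the subtable `Tα` -/
def applyWord (T : Table k) (α : List (ℕ × ℕ)) : Table k where
  attrs := T.attrs
  rows := T.rows.filter (fun r => rowSat r α)
  dec := T.dec
  rows_mem := fun r hr => T.rows_mem r (Finset.mem_filter.mp hr).1
  dec_nonempty := fun r hr => T.dec_nonempty r (Finset.mem_filter.mp hr).1

/-- `T ∈ M_k^{∞c}` : the table has a common decision -/
def hasCommon (T : Table k) : Prop := ∃ d : ℕ, ∀ r ∈ T.rows, d ∈ T.dec r

/-- `N(T)` : number of rows -/
def NT (T : Table k) : ℕ := T.rows.card

/-- `W(T)` : number of columns (`0` for the empty table `Λ`) -/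
def WT (T : Table k) : ℕ := if T.rows = ∅ then 0 else T.attrs.card

/-- the closure `[T]` of `T` under removal of columns and changing of decisions:
`Q = J(ν, I(D,T))` for some `D ⊆ At(T)` and some `ν` (the decision labeling of `Q`
on its rows is arbitrary, i.e. is the arbitrary `ν` with nonempty finite values). -/
def closureT (T : Table k) : Set (Table k) :=
  {Q | ∃ D : Finset ℕ, D ⊆ T.attrs ∧ Q.attrs = T.attrs \ D ∧
      Q.rows = T.rows.image (fun r i => if i ∈ T.attrs \ D then r i else 0)}

end Table

/-- a closed class: `[A] = A` -/
def IsClosedClass {k : ℕ} (A : Set (Table k)) : Prop := ∀ T ∈ A, Table.closureT T ⊆ A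

/-- a nontrivial class: contains nonempty tables -/
def NontrivialClass {k : ℕ} (A : Set (Table k)) : Prop := ∃ T ∈ A, T.rows.Nonempty

/-- the part of a `k`-decision tree below one edge leaving the root -/
inductive DTree (k : ℕ) : Type
  | leaf (d : ℕ) : DTree k
  | node (a : ℕ) (n : ℕ) (lab : Fin (n + 1) → ℕ) (ch : Fin (n + 1) → DTree k) : DTree k

namespace DTree

variable {k : ℕ}

/-- the set of pairs (π(τ), terminal decision) over complete paths τ -/
def paths : DTree k → Set (List (ℕ × ℕ) × ℕ)
  | leaf d => {([], d)}
  | node a _ lab ch =>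
      ⋃ i, (fun p : List (ℕ × ℕ) × ℕ => ((a, lab i) :: p.1, p.2)) '' paths (ch i)

/-- edge labels belong to `E_k` -/
def wf : DTree k → Prop
  | leaf _ => True
  | node _ _ lab ch => (∀ i, lab i < k) ∧ ∀ i, wf (ch i)

/-- edges leaving any node are labeled with pairwise different numbers -/
def det : DTree k → Prop
  | leaf _ => True
  | node _ _ lab ch => Function.Injective lab ∧ ∀ i, det (ch i)

/-- the set of attributes attached to nodes -/
def attrs : DTree k → Finset ℕ
  | leaf _ => ∅
  | node a _ _ ch => insert a (Finset.univ.biUnion fun i => attrs (ch i))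

end DTree

/-- a `k`-decision tree: an unlabeled root with `n+1` unlabeled edges leaving it -/
structure KTree (k : ℕ) where
  n : ℕ
  sub : Fin (n + 1) → DTree k

namespace KTree

variable {k : ℕ}

def paths (Γ : KTree k) : Set (List (ℕ × ℕ) × ℕ) := ⋃ i, (Γ.sub i).paths

def wf (Γ : KTree k) : Prop := ∀ i, (Γ.sub i).wf

def attrs (Γ : KTree k) : Finset ℕ := Finset.univ.biUnion fun i => (Γ.sub i).attrs

end KTree

/-- partially bounded complexity measure on words over `P` -/
structure PBCM where
  toFun : List ℕ → ℕ
  pos : ∀ α, toFun α = 0 ↔ α = []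
  perm : ∀ α β, List.Perm α β → toFun α = toFun β
  mono : ∀ α β, toFun α ≤ toFun (α ++ β)
  subadd : ∀ α β, toFun (α ++ β) ≤ toFun α + toFun β

/-- bounded complexity measure -/
structure BCM extends PBCM where
  bdd : ∀ α, α.length ≤ toFun α

/-- extension of ψ to words over pairs `(f_i, δ)` -/
def PBCM.onWord (ψ : PBCM) (α : List (ℕ × ℕ)) : ℕ := ψ.toFun (α.map Prod.fst)

/-- extension of ψ to finite sets of attributes -/
def PBCM.onSet (ψ : PBCM) (s : Finset ℕ) : ℕ := ψ.toFun (s.sort (· ≤ ·))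

/-- the depth `h` -/
def depthCM : BCM where
  toFun := List.length
  pos := fun α => List.length_eq_zero_iff
  perm := fun _ _ h => h.length_eq
  mono := fun α β => by simp
  subadd := fun α β => by simp
  bdd := fun _ => le_rfl

/-- `ψ(Γ)` : complexity of a decision tree -/
def treeComp {k : ℕ} (ψ : PBCM) (Γ : KTree k) : ℕ :=
  sSup {c | ∃ p ∈ Γ.paths, ψ.onWord p.1 = c}

/-- `Γ` is a nondeterministic decision tree for the (nonempty) table `T` -/
def isNDT {k : ℕ} (T : Table k) (Γ : KTree k) : Prop :=
  T.rows.Nonempty ∧ Γ.wf ∧ Γ.attrs ⊆ T.attrs ∧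
  (∀ r ∈ T.rows, ∃ p ∈ Γ.paths, Table.rowSat r p.1) ∧
  (∀ p ∈ Γ.paths, (T.applyWord p.1).rows = ∅ ∨ ∀ r ∈ (T.applyWord p.1).rows, p.2 ∈ T.dec r)

/-- `Γ` is a deterministic decision tree for `T` -/
def isDDT {k : ℕ} (T : Table k) (Γ : KTree k) : Prop :=
  isNDT T Γ ∧ Γ.n = 0 ∧ ∀ i, (Γ.sub i).det

/-- `ψ^a(T)` -/
def psiA {k : ℕ} (ψ : PBCM) (T : Table k) : ℕ :=
  sInf {c | ∃ Γ : KTree k, isNDT T Γ ∧ treeComp ψ Γ = c}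

/-- `ψ^d(T)` -/
def psiD {k : ℕ} (ψ : PBCM) (T : Table k) : ℕ :=
  sInf {c | ∃ Γ : KTree k, isDDT T Γ ∧ treeComp ψ Γ = c}

/-- `m_ψ(T)` -/
def mpsi {k : ℕ} (ψ : PBCM) (T : Table k) : ℕ :=
  if T.rows = ∅ then 0 else T.attrs.sup fun i => ψ.toFun [i]

/-- `W_ψ(T)` -/
def Wpsi {k : ℕ} (ψ : PBCM) (T : Table k) : ℕ :=
  if T.rows = ∅ then 0 else ψ.onSet T.attrs

/-- a tuple `δ̄ ∈ E_k^{|At(T)|}` -/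
def validTuple {k : ℕ} (T : Table k) (δ : ℕ → ℕ) : Prop :=
  (∀ i ∈ T.attrs, δ i < k) ∧ ∀ i ∉ T.attrs, δ i = 0

/-- `M_ψ(T, δ̄)` -/
def MpsiAt {k : ℕ} (ψ : PBCM) (T : Table k) (δ : ℕ → ℕ) : ℕ :=
  sInf {p | ∃ s : Finset ℕ, s ⊆ T.attrs ∧
    (T.applyWord ((s.sort (· ≤ ·)).map fun i => (i, δ i))).hasCommon ∧ ψ.onSet s = p}

/-- `M_ψ(T)` -/
def Mpsi {k : ℕ} (ψ : PBCM) (T : Table k) : ℕ :=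
  if T.hasCommon then 0 else sSup {p | ∃ δ, validTuple T δ ∧ MpsiAt ψ T δ = p}

/-- `U` is a `(ψ,n)`-cover of `T` -/
def isCover {k : ℕ} (ψ : PBCM) (n : ℕ) (T : Table k) (U : Finset (List (ℕ × ℕ))) : Prop :=
  (∀ α ∈ U, T.wordOk α ∧ ψ.onWord α ≤ n) ∧ ∀ r ∈ T.rows, ∃ α ∈ U, Table.rowSat r α

/-- `U` is an irreducible `(ψ,n)`-cover of `T` -/
def isIrredCover {k : ℕ} (ψ : PBCM) (n : ℕ) (T : Table k) (U : Finset (List (ℕ × ℕ))) : Prop :=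
  isCover ψ n T U ∧ ∀ V ⊂ U, ¬ isCover ψ n T V

/-- `l_ψ(T,n)` : maximum cardinality of an irreducible `(ψ,n)`-cover -/
def lpsi {k : ℕ} (ψ : PBCM) (T : Table k) (n : ℕ) : ℕ :=
  sSup {c | ∃ U, isIrredCover ψ n T U ∧ U.card = c}

/-- the set `{ψ^d(T) : T ∈ A, ψ^a(T) ≤ n}`; `H^∞_{ψ,A}(n)` is defined iff this set
is finite, and is then its maximum -/
def HSet {k : ℕ} (ψ : PBCM) (A : Set (Table k)) (n : ℕ) : Set ℕ :=
  {c | ∃ T ∈ A, psiA ψ T ≤ n ∧ psiD ψ T = c}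

/-- `H^∞_{ψ,A}(n)` (as the max = sSup of the finite set `HSet ψ A n`) -/
def Hfun {k : ℕ} (ψ : PBCM) (A : Set (Table k)) (n : ℕ) : ℕ := sSup (HSet ψ A n)

/-- the set `{l_ψ(T,n) : T ∈ A}` -/
def LSet {k : ℕ} (ψ : PBCM) (A : Set (Table k)) (n : ℕ) : Set ℕ :=
  {c | ∃ T ∈ A, lpsi ψ T n = c}

/-- `L_{ψ,A}(n)` -/
def Lfun {k : ℕ} (ψ : PBCM) (A : Set (Table k)) (n : ℕ) : ℕ := sSup (LSet ψ A n)

/-- `H_D` for an infinite `D ⊆ ℕ` : `H_D(n)` is the largest element of `D` that is `≤ n`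
(and `0` if there is none) -/
def HDfun (D : Set ℕ) (n : ℕ) : ℕ := sSup {d | d ∈ D ∧ d ≤ n}

/-- a complete table from `M_2^∞` -/
def isComplete (Q : Table 2) : Prop := Q.NT = 2 ^ Q.attrs.card

/-- `Z(T)` : maximum number of columns in a complete table from `[T]` (`0` if none) -/
def Zt (T : Table 2) : ℕ := sSup {c | ∃ Q ∈ Table.closureT T, isComplete Q ∧ Q.WT = c}

/-- the set `{Z(T) : T ∈ A_ψ(n)}` -/
def ZSet (ψ : PBCM) (A : Set (Table 2)) (n : ℕ) : Set ℕ :=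
  {c | ∃ T ∈ A, mpsi ψ T ≤ n ∧ Zt T = c}

/-- `Z_{ψ,A}(n)` -/
def Zfun (ψ : PBCM) (A : Set (Table 2)) (n : ℕ) : ℕ := sSup (ZSet ψ A n)

/-- annihilating word for `T` -/
def isAnnih (T : Table 2) (α : List (ℕ × ℕ)) : Prop :=
  T.wordOk α ∧ (∀ p ∈ α, ∀ q ∈ α, p.1 = q.1 → p.2 = q.2) ∧ (T.applyWord α).rows = ∅

/-- irreducible annihilating word for `T` -/
def isIrredAnnih (T : Table 2) (α : List (ℕ × ℕ)) : Prop :=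
  isAnnih T α ∧ ∀ β, β.Sublist α → β ≠ α → ¬ isAnnih T β

/-- `G(T)` : maximum length of an irreducible annihilating word (`0` if none) -/
def Gt (T : Table 2) : ℕ := sSup {c | ∃ α, isIrredAnnih T α ∧ α.length = c}

/-- the set `{G(T) : T ∈ A_ψ(n)}` -/
def GSet (ψ : PBCM) (A : Set (Table 2)) (n : ℕ) : Set ℕ :=
  {c | ∃ T ∈ A, mpsi ψ T ≤ n ∧ Gt T = c}

/-- `G_{ψ,A}(n)` -/
def Gfun (ψ : PBCM) (A : Set (Table 2)) (n : ℕ) : ℕ := sSup (GSet ψ A n)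

/-! ### The tables `T_k` and `T_k^*` built from the triangle-shaped graph `G_k` -/

/-- `m(k) = k(k+1)/2` : number of nodes of `G_k` -/
def mnum (k : ℕ) : ℕ := k * (k + 1) / 2

/-- the layer of node `i` of `G_k` : the unique `L` with `m(L-1) < i ≤ m(L)` -/
def layer (i : ℕ) : ℕ := sInf {L | i ≤ mnum L}

/-- left child `l(i) = i + layer i`; right child `p(i) = i + layer i + 1` -/
def lchild (i : ℕ) : ℕ := i + layer i

def rchild (i : ℕ) : ℕ := i + layer i + 1

/-- the map `ν_k : E_2^{m(k)} → P(ω)` -/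
def nuk (k : ℕ) (δ : ℕ → ℕ) : Finset ℕ :=
  (Finset.range (mnum k + 1)).filter fun i =>
    if i = 0 then δ 1 = 0
    else if layer i = k then δ i = 1
    else δ i = 1 ∧ δ (lchild i) = 0 ∧ δ (rchild i) = 0

/-- all tuples over `E_k` supported on the attribute set `s` -/
def allRows (k : ℕ) (s : Finset ℕ) : Finset (ℕ → ℕ) :=
  (s.pi fun _ => Finset.range k).image fun f i => if h : i ∈ s then f i h else 0

/-- the table with attribute set `s`, all possible rows, and decision labeling `d` -/
def fullTable (k : ℕ) (s : Finset ℕ) (d : (ℕ → ℕ) → Finset ℕ) : Table k where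
  attrs := s
  rows := allRows k s
  dec := fun r => if (d r).Nonempty then d r else {0}
  rows_mem := by
    intro r hr
    simp only [allRows, Finset.mem_image] at hr
    obtain ⟨f, hf, rfl⟩ := hr
    refine ⟨fun i hi => ?_, fun i hi => ?_⟩
    · have h := (Finset.mem_pi.mp hf) i hi
      simp only [Finset.mem_range] at h
      simpa [hi] using h
    · simp [hi]
  dec_nonempty := by
    intro r _
    by_cases h : (d r).Nonempty
    · simp [h]
    · simp [h]

/-- the complete table `T_k` with `m(k)` columns `f_1, …, f_{m(k)}` and `2^{m(k)}` rows,
each row `δ̄` labeled with `ν_k(δ̄)` (which is always nonempty) -/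
def Tk (k : ℕ) : Table 2 := fullTable 2 (Finset.Icc 1 (mnum k)) (nuk k)

/-- the `j`-th node of the complete path of `G_k` determined by the choices `c` -/
def pathNode (c : ℕ → Bool) : ℕ → ℕ
  | 0 => 1
  | j + 1 => if c j then lchild (pathNode c j) else rchild (pathNode c j)

/-- `T_k^*` : the subtable of `T_k` whose rows are exactly the characteristic tuples
of complete paths of `G_k` -/
def Tstar (k : ℕ) : Table 2 where
  attrs := (Tk k).attrs
  rows := (Tk k).rows.filter fun r =>
    ∃ c : ℕ → Bool, ∀ i ∈ Finset.Icc 1 (mnum k), (r i = 1 ↔ ∃ j < k, pathNode c j = i)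
  dec := (Tk k).dec
  rows_mem := fun r hr => (Tk k).rows_mem r (Finset.mem_filter.mp hr).1
  dec_nonempty := fun r hr => (Tk k).dec_nonempty r (Finset.mem_filter.mp hr).1

/-- `r(T)` for a subtable `T` of `T_k^*` : the number of distinct decision sets
`ν_k(δ̄)` among the rows `δ̄` of `T` -/
def rnum (k : ℕ) (T : Table 2) : ℕ := (T.rows.image (nuk k)).card


/-! ### Auxiliary lemmas for stmt18 -/

lemma DTree.paths_nonempty' {k : ℕ} (t : DTree k) : ∃ p, p ∈ t.paths := by
  induction t with
  | leaf d => exact ⟨([], d), rfl⟩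
  | node a n lab ch ih =>
    obtain ⟨p, hp⟩ := ih 0
    exact ⟨((a, lab 0) :: p.1, p.2), Set.mem_iUnion.mpr ⟨0, ⟨p, hp, rfl⟩⟩⟩

lemma DTree.paths_finite' {k : ℕ} (t : DTree k) : t.paths.Finite := by
  induction t with
  | leaf d => exact Set.finite_singleton _
  | node a n lab ch ih => exact Set.finite_iUnion fun i => ((ih i).image _)

lemma rowSat_cons {r : ℕ → ℕ} {a v : ℕ} {q : List (ℕ × ℕ)} :
    Table.rowSat r ((a, v) :: q) ↔ r a = v ∧ Table.rowSat r q := by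
  simp [Table.rowSat]

lemma keyInd (m : ℕ) (a δ : ℕ → ℕ) (ρ : ℕ → ℕ → ℕ)
    (hother : ∀ j, j < m → ∀ l, l < m → l ≠ j → ρ j (a l) = δ l) :
    ∀ t : DTree 2, t.det →
    (∀ b ∈ t.attrs, ∃ l, l < m ∧ a l = b) →
    ∀ S : Finset ℕ, (∀ j ∈ S, j < m) →
    (∀ j ∈ S, ∃ p ∈ t.paths, Table.rowSat (ρ j) p.1) →
    (∀ p ∈ t.paths, ∀ j ∈ S, Table.rowSat (ρ j) p.1 → p.2 = j) →
    ∃ p ∈ t.paths, S.card - 1 ≤ p.1.length := by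
  intro t
  induction t with
  | leaf d =>
    intro _ _ S hSm H1 H2
    refine ⟨([], d), rfl, ?_⟩
    have hcard : S.card ≤ 1 := by
      refine Finset.card_le_one.mpr fun j hj l hl => ?_
      have h1 : (([], d) : List (ℕ × ℕ) × ℕ).2 = j :=
        H2 ([], d) rfl j hj (by intro q hq; simp at hq)
      have h2 : (([], d) : List (ℕ × ℕ) × ℕ).2 = l :=
        H2 ([], d) rfl l hl (by intro q hq; simp at hq)
      simp only at h1 h2; omega
    simp; omega
  | node a0 nch lab ch ih =>
    intro hdet hattr S hSm H1 H2
    obtain ⟨l0, hl0m, hal0⟩ := hattr a0 (Finset.mem_insert_self _ _)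
    have hmem_paths : ∀ (i : Fin (nch + 1)) (q : List (ℕ × ℕ) × ℕ), q ∈ (ch i).paths →
        ((a0, lab i) :: q.1, q.2) ∈ DTree.paths (DTree.node a0 nch lab ch) := by
      intro i q hq
      exact Set.mem_iUnion.mpr ⟨i, ⟨q, hq, rfl⟩⟩
    have hpaths_mem : ∀ p ∈ DTree.paths (DTree.node a0 nch lab ch),
        ∃ (i : Fin (nch + 1)) (q : List (ℕ × ℕ) × ℕ),
          q ∈ (ch i).paths ∧ p = ((a0, lab i) :: q.1, q.2) := by
      intro p hp
      obtain ⟨i, q, hq, hpq⟩ := Set.mem_iUnion.mp hp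
      exact ⟨i, q, hq, hpq.symm⟩
    have hattr' : ∀ (i : Fin (nch + 1)), ∀ b ∈ (ch i).attrs, ∃ l, l < m ∧ a l = b := by
      intro i b hb
      exact hattr b (Finset.mem_insert_of_mem (Finset.mem_biUnion.mpr ⟨i, Finset.mem_univ i, hb⟩))
    have hval : ∀ j ∈ S, j ≠ l0 → ρ j a0 = δ l0 := by
      intro j hj hjl0
      rw [← hal0]
      exact hother j (hSm j hj) l0 hl0m (fun h => hjl0 h.symm)
    have step : ∀ i0 : Fin (nch + 1), lab i0 = δ l0 →
        (∀ j ∈ S, j ≠ l0 → ∃ q ∈ (ch i0).paths, Table.rowSat (ρ j) q.1) ∧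
        (∀ q ∈ (ch i0).paths, ∀ j ∈ S, j ≠ l0 → Table.rowSat (ρ j) q.1 → q.2 = j) := by
      intro i0 hi0
      constructor
      · intro j hj hjne
        obtain ⟨p, hp, hsat⟩ := H1 j hj
        obtain ⟨i, q, hq, rfl⟩ := hpaths_mem p hp
        obtain ⟨hhead, htail⟩ := rowSat_cons.mp hsat
        have hii : i = i0 := hdet.1 (by rw [← hhead, hval j hj hjne, hi0])
        subst hii
        exact ⟨q, hq, htail⟩
      · intro q hq j hj hjne hsat
        exact H2 _ (hmem_paths i0 q hq) j hj
          (rowSat_cons.mpr ⟨by rw [hi0]; exact hval j hj hjne, hsat⟩)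
    by_cases hl0S : l0 ∈ S
    · rcases (S.erase l0).eq_empty_or_nonempty with he | ⟨l1, hl1⟩
      · obtain ⟨q, hq⟩ := DTree.paths_nonempty' (ch 0)
        refine ⟨_, hmem_paths 0 q hq, ?_⟩
        have hsub : S ⊆ {l0} := fun x hx => Finset.mem_singleton.mpr (by
          by_contra hx0
          exact absurd (Finset.mem_erase.mpr ⟨hx0, hx⟩) (by simp [he]))
        have := Finset.card_le_card hsub
        simp only [Finset.card_singleton] at this
        omega
      · have hl1S := Finset.mem_of_mem_erase hl1
        have hl1ne : l1 ≠ l0 := Finset.ne_of_mem_erase hl1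
        obtain ⟨p, hp, hsat⟩ := H1 l1 hl1S
        obtain ⟨i0, q, hq, rfl⟩ := hpaths_mem p hp
        have hlabi0 : lab i0 = δ l0 := ((rowSat_cons.mp hsat).1).symm.trans (hval l1 hl1S hl1ne)
        obtain ⟨step1, step2⟩ := step i0 hlabi0
        obtain ⟨q', hq', hlen⟩ := ih i0 (hdet.2 i0) (hattr' i0) (S.erase l0)
          (fun j hj => hSm j (Finset.mem_of_mem_erase hj))
          (fun j hj => step1 j (Finset.mem_of_mem_erase hj) (Finset.ne_of_mem_erase hj))
          (fun q hq j hj hs => step2 q hq j (Finset.mem_of_mem_erase hj)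
            (Finset.ne_of_mem_erase hj) hs)
        refine ⟨_, hmem_paths i0 q' hq', ?_⟩
        have hc := Finset.card_erase_of_mem hl0S
        have hpos : 1 ≤ S.card := Finset.card_pos.mpr ⟨l0, hl0S⟩
        simp only [List.length_cons]
        omega
    · rcases S.eq_empty_or_nonempty with rfl | ⟨j1, hj1⟩
      · obtain ⟨q, hq⟩ := DTree.paths_nonempty' (ch 0)
        exact ⟨_, hmem_paths 0 q hq, by simp⟩
      · have hj1ne : j1 ≠ l0 := fun h => hl0S (h ▸ hj1)
        obtain ⟨p, hp, hsat⟩ := H1 j1 hj1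
        obtain ⟨i0, q, hq, rfl⟩ := hpaths_mem p hp
        have hlabi0 : lab i0 = δ l0 := ((rowSat_cons.mp hsat).1).symm.trans (hval j1 hj1 hj1ne)
        obtain ⟨step1, step2⟩ := step i0 hlabi0
        obtain ⟨q', hq', hlen⟩ := ih i0 (hdet.2 i0) (hattr' i0) S hSm
          (fun j hj => step1 j hj (fun h => hl0S (h ▸ hj)))
          (fun q hq j hj hs => step2 q hq j hj (fun h => hl0S (h ▸ hj)) hs)
        exact ⟨_, hmem_paths i0 q' hq', by simp only [List.length_cons]; omega⟩


/-- full binary decision tree querying the attributes in `L` in order -/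
def fullDT (dfn : List (ℕ × ℕ) → ℕ) : List ℕ → List (ℕ × ℕ) → DTree 2
  | [], w => DTree.leaf (dfn w)
  | a :: L, w =>
      DTree.node a 1 (fun i => (i : Fin 2).val)
        (fun i => fullDT dfn L (w ++ [(a, (i : Fin 2).val)]))

lemma fullDT_det (dfn : List (ℕ × ℕ) → ℕ) :
    ∀ (L : List ℕ) (w : List (ℕ × ℕ)), (fullDT dfn L w).det := by
  intro L
  induction L with
  | nil => intro w; trivial
  | cons a L ih =>
    intro w
    exact ⟨fun i j h => Fin.val_injective h, fun i => ih _⟩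

lemma fullDT_wf (dfn : List (ℕ × ℕ) → ℕ) :
    ∀ (L : List ℕ) (w : List (ℕ × ℕ)), (fullDT dfn L w).wf := by
  intro L
  induction L with
  | nil => intro w; trivial
  | cons a L ih =>
    intro w
    exact ⟨fun i => i.isLt, fun i => ih _⟩

lemma fullDT_attrs (dfn : List (ℕ × ℕ) → ℕ) :
    ∀ (L : List ℕ) (w : List (ℕ × ℕ)), (fullDT dfn L w).attrs ⊆ L.toFinset := by
  intro L
  induction L with
  | nil => intro w; exact fun b hb => absurd hb (by simp [fullDT, DTree.attrs])
  | cons a L ih =>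
    intro w b hb
    simp only [fullDT, DTree.attrs, Finset.mem_insert, Finset.mem_biUnion] at hb
    rcases hb with rfl | ⟨i, _, hb⟩
    · simp
    · simp only [List.toFinset_cons, Finset.mem_insert]
      exact Or.inr (ih _ hb)

lemma fullDT_paths (dfn : List (ℕ × ℕ) → ℕ) :
    ∀ (L : List ℕ) (w : List (ℕ × ℕ)), ∀ p ∈ (fullDT dfn L w).paths,
      p.1.map Prod.fst = L ∧ p.2 = dfn (w ++ p.1) := by
  intro L
  induction L with
  | nil =>
    intro w p hp
    simp only [fullDT, DTree.paths, Set.mem_singleton_iff] at hp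
    subst hp
    simp
  | cons a L ih =>
    intro w p hp
    simp only [fullDT, DTree.paths] at hp
    obtain ⟨i, q, hq, hpq⟩ := Set.mem_iUnion.mp hp
    obtain ⟨h1, h2⟩ := ih (w ++ [(a, (i : Fin 2).val)]) q hq
    subst hpq
    constructor
    · simp [h1]
    · simp only [h2]
      congr 1
      simp
lemma fullDT_cover (dfn : List (ℕ × ℕ) → ℕ) :
    ∀ (L : List ℕ) (w : List (ℕ × ℕ)) (r : ℕ → ℕ), (∀ i, r i < 2) →
      ∃ p ∈ (fullDT dfn L w).paths, Table.rowSat r p.1 := by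
  intro L
  induction L with
  | nil =>
    intro w r _
    exact ⟨([], dfn w), rfl, by intro q hq; simp at hq⟩
  | cons a L ih =>
    intro w r hr
    obtain ⟨q, hq, hsat⟩ := ih (w ++ [(a, ((⟨r a, hr a⟩ : Fin 2) : Fin 2).val)]) r hr
    refine ⟨((a, ((⟨r a, hr a⟩ : Fin 2) : Fin 2).val) :: q.1, q.2), ?_, ?_⟩
    · exact Set.mem_iUnion.mpr ⟨⟨r a, hr a⟩, ⟨q, hq, rfl⟩⟩
    · exact rowSat_cons.mpr ⟨rfl, hsat⟩


lemma isIrredAnnih.nodup_fst {T : Table 2} {α : List (ℕ × ℕ)} (h : isIrredAnnih T α) :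
    (α.map Prod.fst).Nodup := by
  have hnd : α.Nodup := by
    by_contra hnd
    refine h.2 α.dedup α.dedup_sublist (fun he => hnd (he ▸ α.nodup_dedup)) ?_
    refine ⟨fun q hq => h.1.1 q (List.mem_dedup.mp hq),
      fun p hp q hq => h.1.2.1 p (List.mem_dedup.mp hp) q (List.mem_dedup.mp hq), ?_⟩
    have : (T.applyWord α.dedup).rows = (T.applyWord α).rows := by
      show T.rows.filter _ = T.rows.filter _
      refine Finset.filter_congr fun r _ => ?_
      constructor
      · intro hs q hq
        exact hs q (List.mem_dedup.mpr hq)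
      · intro hs q hq
        exact hs q (List.mem_dedup.mp hq)
    rw [this]
    exact h.1.2.2
  exact hnd.map_on fun p hp q hq hpq =>
    Prod.ext hpq (h.1.2.1 p hp q hq hpq)

lemma isIrredAnnih.length_le {T : Table 2} {α : List (ℕ × ℕ)} (h : isIrredAnnih T α) :
    α.length ≤ T.attrs.card := by
  have hnd := h.nodup_fst
  have hsub : (α.map Prod.fst).toFinset ⊆ T.attrs := by
    intro b hb
    obtain ⟨q, hq, rfl⟩ := List.mem_map.mp (List.mem_toFinset.mp hb)
    exact (h.1.1 q hq).1
  calc α.length = (α.map Prod.fst).length := (List.length_map _).symm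
    _ = (α.map Prod.fst).toFinset.card := (List.toFinset_card_of_nodup hnd).symm
    _ ≤ T.attrs.card := Finset.card_le_card hsub

lemma Gt_attained {T : Table 2} (hg : 1 ≤ Gt T) :
    ∃ α, isIrredAnnih T α ∧ α.length = Gt T := by
  have hbdd : BddAbove {c | ∃ α, isIrredAnnih T α ∧ α.length = c} :=
    ⟨T.attrs.card, fun c ⟨α, hα, hc⟩ => hc ▸ hα.length_le⟩
  have hne : {c | ∃ α, isIrredAnnih T α ∧ α.length = c}.Nonempty := by
    by_contra hne
    rw [Set.not_nonempty_iff_eq_empty] at hne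
    rw [Gt, hne] at hg
    simp at hg
  exact Nat.sSup_mem hne hbdd


lemma KTree.paths_finite' {k : ℕ} (Γ : KTree k) : Γ.paths.Finite :=
  Set.finite_iUnion fun i => (Γ.sub i).paths_finite'

lemma crux (A : Set (Table 2)) (hclosed : IsClosedClass A) (ψ : BCM) (n : ℕ)
    (hH : (HSet ψ.toPBCM A n).Finite)
    (T : Table 2) (hTA : T ∈ A) (hmT : mpsi ψ.toPBCM T ≤ n)
    (α : List (ℕ × ℕ)) (hα : isIrredAnnih T α) (h2 : 2 ≤ α.length) :
    α.length - 1 ≤ Hfun ψ.toPBCM A n := by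
  classical
  set m := α.length with hm
  -- the attribute and value sequences of α
  set a : ℕ → ℕ := fun j => (α.getD j (0, 0)).1 with ha
  set δ : ℕ → ℕ := fun j => (α.getD j (0, 0)).2 with hδ
  set E : Finset ℕ := (α.map Prod.fst).toFinset with hE
  have hgetD : ∀ j (hj : j < m), α.getD j (0, 0) = α[j] := fun j hj => List.getD_eq_getElem α _ hj
  have hEsub : E ⊆ T.attrs := by
    intro b hb
    obtain ⟨q, hq, rfl⟩ := List.mem_map.mp (List.mem_toFinset.mp hb)
    exact (hα.1.1 q hq).1
  have haE : ∀ j, j < m → a j ∈ E := by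
    intro j hj
    rw [ha]
    simp only [hE, List.mem_toFinset]
    exact List.mem_map.mpr ⟨α.getD j (0, 0), by rw [hgetD j hj]; exact α.getElem_mem _, rfl⟩
  have haT : ∀ j, j < m → a j ∈ T.attrs := fun j hj => hEsub (haE j hj)
  have hδlt : ∀ j, j < m → δ j < 2 := by
    intro j hj
    rw [hδ]
    simp only [hgetD j hj]
    exact (hα.1.1 α[j] (α.getElem_mem _)).2
  have hainj : ∀ j, j < m → ∀ l, l < m → a j = a l → j = l := by
    intro j hj l hl hjl
    have hnd := hα.nodup_fst
    have hj' : j < (α.map Prod.fst).length := by simpa using hj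
    have hl' : l < (α.map Prod.fst).length := by simpa using hl
    have : (α.map Prod.fst)[j] = (α.map Prod.fst)[l] := by
      simp only [List.getElem_map]
      rw [ha] at hjl
      simpa only [hgetD j hj, hgetD l hl] using hjl
    exact (List.Nodup.getElem_inj_iff hnd).mp this
  have hEmem : ∀ b ∈ E, ∃ l, l < m ∧ a l = b := by
    intro b hb
    obtain ⟨q, hq, rfl⟩ := List.mem_map.mp (List.mem_toFinset.mp hb)
    obtain ⟨l, hl, hql⟩ := List.mem_iff_getElem.mp hq
    exact ⟨l, hl, by rw [ha]; simp only [hgetD l hl]; rw [hql]⟩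
  -- T is nonempty
  have hTne : T.rows.Nonempty := by
    rw [Finset.nonempty_iff_ne_empty]
    intro hemp
    refine hα.2 [] (List.nil_sublist α) (fun h => by
      have h0 : α.length = 0 := by rw [← h]; rfl
      omega) ?_
    refine ⟨fun q hq => absurd hq List.not_mem_nil, fun p hp => absurd hp List.not_mem_nil, ?_⟩
    show T.rows.filter _ = ∅
    rw [hemp]
    exact Finset.filter_empty _
  -- every row of T falsifies some letter of α
  have hfail : ∀ r ∈ T.rows, ∃ j, j < m ∧ r (a j) ≠ δ j := by
    intro r hr
    have hemp := hα.1.2.2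
    have : ¬ Table.rowSat r α := by
      intro hsat
      have : r ∈ (T.applyWord α).rows := Finset.mem_filter.mpr ⟨hr, hsat⟩
      rw [hemp] at this
      exact absurd this (Finset.notMem_empty r)
    simp only [Table.rowSat, not_forall] at this
    obtain ⟨q, hq, hne⟩ := this
    obtain ⟨l, hl, hql⟩ := List.mem_iff_getElem.mp hq
    refine ⟨l, hl, ?_⟩
    rw [ha, hδ]
    simp only [hgetD l hl, hql]
    exact hne
  -- witness rows
  have hwitness : ∀ j, j < m → ∃ r ∈ T.rows, Table.rowSat r (α.eraseIdx j) := by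
    intro j hj
    have hsub : (α.eraseIdx j).Sublist α := List.eraseIdx_sublist α j
    have hlen : (α.eraseIdx j).length = m - 1 := by
      have := List.length_eraseIdx_of_lt hj
      omega
    have hne : α.eraseIdx j ≠ α := fun h => by
      rw [h] at hlen; omega
    have hnA : ¬ isAnnih T (α.eraseIdx j) := hα.2 _ hsub hne
    have hwOk : (T.wordOk (α.eraseIdx j)) := fun q hq => hα.1.1 q (List.Sublist.mem hq hsub)
    have hpw : ∀ p ∈ α.eraseIdx j, ∀ q ∈ α.eraseIdx j, p.1 = q.1 → p.2 = q.2 :=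
      fun p hp q hq => hα.1.2.1 p (List.Sublist.mem hp hsub) q (List.Sublist.mem hq hsub)
    have : (T.applyWord (α.eraseIdx j)).rows ≠ ∅ := fun h => hnA ⟨hwOk, hpw, h⟩
    obtain ⟨r, hr⟩ := Finset.nonempty_iff_ne_empty.mpr this
    have := Finset.mem_filter.mp hr
    exact ⟨r, this.1, this.2⟩
  set s : ℕ → (ℕ → ℕ) := fun j =>
    if h : j < m then (hwitness j h).choose else fun _ => 0 with hs
  have hs_mem : ∀ j, j < m → s j ∈ T.rows := by
    intro j hj
    rw [hs]
    simp only [dif_pos hj]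
    exact (hwitness j hj).choose_spec.1
  have hs_sat : ∀ j, j < m → Table.rowSat (s j) (α.eraseIdx j) := by
    intro j hj
    rw [hs]
    simp only [dif_pos hj]
    exact (hwitness j hj).choose_spec.2
  have hs_other : ∀ j, j < m → ∀ l, l < m → l ≠ j → s j (a l) = δ l := by
    intro j hj l hl hlj
    have hsat := hs_sat j hj
    have hmem : α[l] ∈ α.eraseIdx j := by
      rcases Nat.lt_or_ge l j with h | h
      · have hl' : l < (α.eraseIdx j).length := by
          have := List.length_eraseIdx_of_lt hj; omega
        have := List.getElem_eraseIdx (l := α) (i := j) (j := l) hl'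
        rw [dif_pos h] at this
        exact this ▸ List.getElem_mem hl'
      · have hlj' : j < l := lt_of_le_of_ne h (Ne.symm hlj)
        obtain ⟨l0, rfl⟩ : ∃ l0, l = l0 + 1 := ⟨l - 1, by omega⟩
        have hl' : l0 < (α.eraseIdx j).length := by
          have := List.length_eraseIdx_of_lt hj; omega
        have heq := List.getElem_eraseIdx (l := α) (i := j) (j := l0) hl'
        rw [dif_neg (by omega)] at heq
        exact heq ▸ List.getElem_mem hl'
    have := hsat α[l] hmem
    rw [ha, hδ]
    simpa only [hgetD l hl] using this
  have hs_self : ∀ j, j < m → s j (a j) ≠ δ j := by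
    intro j hj
    obtain ⟨l, hl, hne⟩ := hfail (s j) (hs_mem j hj)
    rcases eq_or_ne l j with rfl | hlj
    · exact hne
    · exact absurd (hs_other j hj l hl hlj) hne
  -- the table Q ∈ [T]
  set projE : (ℕ → ℕ) → (ℕ → ℕ) := fun r i => if i ∈ E then r i else 0 with hprojE
  have hsdiff : T.attrs \ (T.attrs \ E) = E := by
    rw [Finset.sdiff_sdiff_self_left]
    exact Finset.inter_eq_right.mpr hEsub
  set Q : Table 2 := {
    attrs := E
    rows := T.rows.image projE
    dec := fun ρ => (Finset.range m).filter fun j => ρ (a j) ≠ δ j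
    rows_mem := by
      intro ρ hρ
      obtain ⟨r, hr, rfl⟩ := Finset.mem_image.mp hρ
      constructor
      · intro i hi
        have h1 : projE r i = r i := by rw [hprojE]; simp [hi]
        rw [h1]
        exact (T.rows_mem r hr).1 i (hEsub hi)
      · intro i hi
        rw [hprojE]; simp [hi]
    dec_nonempty := by
      intro ρ hρ
      obtain ⟨r, hr, rfl⟩ := Finset.mem_image.mp hρ
      obtain ⟨j, hj, hne⟩ := hfail r hr
      refine ⟨j, Finset.mem_filter.mpr ⟨Finset.mem_range.mpr hj, ?_⟩⟩
      have h1 : projE r (a j) = r (a j) := by rw [hprojE]; simp [haE j hj]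
      rw [h1]
      exact hne } with hQ
  have hQattrs : Q.attrs = E := rfl
  have hQrows : Q.rows = T.rows.image projE := rfl
  have hQdec : ∀ ρ, Q.dec ρ = (Finset.range m).filter fun j => ρ (a j) ≠ δ j := fun _ => rfl
  have hQA : Q ∈ A := by
    refine hclosed T hTA ⟨T.attrs \ E, Finset.sdiff_subset, hsdiff.symm, ?_⟩
    rw [hQrows]
    congr 1
    rw [hprojE, hsdiff]
  set ρ : ℕ → ℕ → ℕ := fun j => projE (s j) with hρ
  have hρmem : ∀ j, j < m → ρ j ∈ Q.rows := fun j hj =>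
    Finset.mem_image_of_mem _ (hs_mem j hj)
  have hρother : ∀ j, j < m → ∀ l, l < m → l ≠ j → ρ j (a l) = δ l := by
    intro j hj l hl hlj
    show projE (s j) (a l) = δ l
    have h1 : projE (s j) (a l) = s j (a l) := by rw [hprojE]; simp [haE l hl]
    rw [h1]
    exact hs_other j hj l hl hlj
  have hρself : ∀ j, j < m → ρ j (a j) ≠ δ j := by
    intro j hj
    show projE (s j) (a j) ≠ δ j
    have h1 : projE (s j) (a j) = s j (a j) := by rw [hprojE]; simp [haE j hj]
    rw [h1]
    exact hs_self j hj
  have hρdec : ∀ j, j < m → ∀ d, d ∈ Q.dec (ρ j) → d = j := by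
    intro j hj d hd
    rw [hQdec] at hd
    obtain ⟨hdm, hne⟩ := Finset.mem_filter.mp hd
    rw [Finset.mem_range] at hdm
    by_contra hdj
    exact hne (hρother j hj d hdm hdj)
  have hQrows_lt : ∀ ρ' ∈ Q.rows, ∀ i, ρ' i < 2 := by
    intro ρ' h i
    by_cases hi : i ∈ E
    · exact (Q.rows_mem ρ' h).1 i hi
    · rw [(Q.rows_mem ρ' h).2 i hi]; omega
  have hQne : Q.rows.Nonempty := hTne.image _
  -- the nondeterministic tree Γ1 of complexity ≤ n
  have hfin : ∀ j : Fin (m - 1 + 1), j.val < m := fun j => by have := j.isLt; omega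
  set Γ1 : KTree 2 := ⟨m - 1, fun j =>
    DTree.node (a j.val) 0 (fun _ => 1 - δ j.val) (fun _ => DTree.leaf j.val)⟩ with hΓ1
  have hp1 : ∀ j : Fin (m - 1 + 1), ([(a j.val, 1 - δ j.val)], j.val) ∈ Γ1.paths := by
    intro j
    refine Set.mem_iUnion.mpr ⟨j, ?_⟩
    exact Set.mem_iUnion.mpr ⟨0, ⟨([], j.val), rfl, rfl⟩⟩
  have hp2 : ∀ p ∈ Γ1.paths, ∃ j : Fin (m - 1 + 1), p = ([(a j.val, 1 - δ j.val)], j.val) := by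
    intro p hp
    obtain ⟨j, hpj⟩ := Set.mem_iUnion.mp hp
    obtain ⟨i, hpi⟩ := Set.mem_iUnion.mp hpj
    obtain ⟨q, hq, hpq⟩ := hpi
    have hq' : q = ([], j.val) := hq
    subst hq'
    exact ⟨j, hpq ▸ rfl⟩
  have hNDT1 : isNDT Q Γ1 := by
    refine ⟨hQne, ?_, ?_, ?_, ?_⟩
    · intro j
      exact ⟨fun i => by show 1 - δ j.val < 2; omega, fun i => trivial⟩
    · intro b hb
      obtain ⟨j, _, hb⟩ := Finset.mem_biUnion.mp hb
      change b ∈ insert (a j.val) (Finset.univ.biUnion fun _ : Fin (0 + 1) => (DTree.leaf j.val : DTree 2).attrs) at hb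
      rcases Finset.mem_insert.mp hb with rfl | hb
      · exact haE j.val (hfin j)
      · simp [DTree.attrs] at hb
    · intro r hr
      obtain ⟨r0, hr0, hr0eq⟩ := Finset.mem_image.mp hr
      obtain ⟨j, hj, hne⟩ := hfail r0 hr0
      have hval : r (a j) = r0 (a j) := by rw [← hr0eq, hprojE]; simp [haE j hj]
      have hlt : r (a j) < 2 := hQrows_lt r hr _
      have hδj := hδlt j hj
      have hr1 : r (a j) = 1 - δ j := by rw [hval] at hlt ⊢; omega
      refine ⟨([(a j, 1 - δ j)], j), hp1 ⟨j, by omega⟩, ?_⟩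
      intro q hq
      rw [List.mem_singleton] at hq
      subst hq
      exact hr1
    · intro p hp
      obtain ⟨j, rfl⟩ := hp2 p hp
      right
      intro r hr
      obtain ⟨hrQ, hrsat⟩ := Finset.mem_filter.mp hr
      have h1 : r (a j.val) = 1 - δ j.val := hrsat _ (List.mem_singleton.mpr rfl)
      rw [hQdec]
      refine Finset.mem_filter.mpr ⟨Finset.mem_range.mpr (hfin j), ?_⟩
      show r (a j.val) ≠ δ j.val
      have := hδlt j.val (hfin j)
      omega
  have hcomp1 : treeComp ψ.toPBCM Γ1 ≤ n := by
    refine csSup_le' ?_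
    rintro c ⟨p, hp, rfl⟩
    obtain ⟨j, rfl⟩ := hp2 p hp
    show ψ.toFun [a j.val] ≤ n
    calc ψ.toFun [a j.val] ≤ mpsi ψ.toPBCM T := by
          rw [mpsi, if_neg (by simpa using Finset.nonempty_iff_ne_empty.mp hTne)]
          exact Finset.le_sup (f := fun i => ψ.toFun [i]) (haT j.val (hfin j))
      _ ≤ n := hmT
  have hpsiA : psiA ψ.toPBCM Q ≤ n := le_trans (Nat.sInf_le ⟨Γ1, hNDT1, rfl⟩) hcomp1
  -- a deterministic decision tree for Q exists
  set L : List ℕ := α.map Prod.fst with hL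
  have hLfin : L.toFinset = E := rfl
  set dfn : List (ℕ × ℕ) → ℕ := fun w =>
    if h : ∃ d, ∀ ρ' ∈ (Q.applyWord w).rows, d ∈ Q.dec ρ' then h.choose else 0 with hdfn
  set Γ0 : KTree 2 := ⟨0, fun _ => fullDT dfn L []⟩ with hΓ0
  have hΓ0paths : ∀ p, p ∈ Γ0.paths ↔ p ∈ (fullDT dfn L []).paths := by
    intro p
    constructor
    · intro hp; obtain ⟨i, hp⟩ := Set.mem_iUnion.mp hp; exact hp
    · intro hp; exact Set.mem_iUnion.mpr ⟨0, hp⟩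
  have hDDT0 : isDDT Q Γ0 := by
    refine ⟨⟨hQne, fun i => fullDT_wf dfn L [], ?_, ?_, ?_⟩, rfl, fun i => fullDT_det dfn L []⟩
    · intro b hb
      obtain ⟨i, _, hb⟩ := Finset.mem_biUnion.mp hb
      exact fullDT_attrs dfn L [] hb
    · intro r hr
      obtain ⟨p, hp, hsat⟩ := fullDT_cover dfn L [] r (hQrows_lt r hr)
      exact ⟨p, (hΓ0paths p).mpr hp, hsat⟩
    · intro p hp
      obtain ⟨hmap, hdec⟩ := fullDT_paths dfn L [] p ((hΓ0paths p).mp hp)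
      by_cases hrows : (Q.applyWord p.1).rows = ∅
      · exact Or.inl hrows
      right
      obtain ⟨ρ0, hρ0⟩ := Finset.nonempty_iff_ne_empty.mpr hrows
      have hall : ∀ ρ' ∈ (Q.applyWord p.1).rows, ρ' = ρ0 := by
        intro ρ' hρ'
        obtain ⟨hρ'Q, hρ'sat⟩ := Finset.mem_filter.mp hρ'
        obtain ⟨hρ0Q, hρ0sat⟩ := Finset.mem_filter.mp hρ0
        funext i
        by_cases hi : i ∈ E
        · have hiL : i ∈ L := List.mem_toFinset.mp (hLfin ▸ hi)
          rw [← hmap] at hiL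
          obtain ⟨q, hq, hq1⟩ := List.mem_map.mp hiL
          rw [← hq1, hρ'sat q hq, hρ0sat q hq]
        · rw [(Q.rows_mem ρ' hρ'Q).2 i hi, (Q.rows_mem ρ0 hρ0Q).2 i hi]
      have hex : ∃ d, ∀ ρ' ∈ (Q.applyWord p.1).rows, d ∈ Q.dec ρ' := by
        obtain ⟨d0, hd0⟩ := Q.dec_nonempty ρ0 (Finset.mem_filter.mp hρ0).1
        exact ⟨d0, fun ρ' hρ' => (hall ρ' hρ') ▸ hd0⟩
      intro ρ' hρ'
      rw [hdec]
      simp only [List.nil_append, hdfn]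
      rw [dif_pos hex]
      exact hex.choose_spec ρ' hρ'
  -- every deterministic tree for Q has complexity ≥ m - 1
  have hDset : {c | ∃ Γ : KTree 2, isDDT Q Γ ∧ treeComp ψ.toPBCM Γ = c}.Nonempty :=
    ⟨_, Γ0, hDDT0, rfl⟩
  obtain ⟨Γ', hΓ'D, hΓ'c⟩ := Nat.sInf_mem hDset
  obtain ⟨hNDT', hn0, hdet'⟩ := hΓ'D
  set i0 : Fin (Γ'.n + 1) := ⟨0, Nat.succ_pos _⟩ with hi0
  have hpaths_eq : Γ'.paths = (Γ'.sub i0).paths := by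
    ext p
    constructor
    · intro hp
      obtain ⟨i, hp⟩ := Set.mem_iUnion.mp hp
      have hii : i = i0 := by
        apply Fin.ext
        have hlt := i.isLt
        have h0 : (i0 : ℕ) = 0 := rfl
        omega
      exact hii ▸ hp
    · intro hp; exact Set.mem_iUnion.mpr ⟨i0, hp⟩
  have hattr0 : ∀ b ∈ (Γ'.sub i0).attrs, ∃ l, l < m ∧ a l = b := by
    intro b hb
    have : b ∈ Q.attrs := hNDT'.2.2.1 (Finset.mem_biUnion.mpr ⟨i0, Finset.mem_univ _, hb⟩)
    exact hEmem b this
  have H1 : ∀ j ∈ Finset.range m, ∃ p ∈ (Γ'.sub i0).paths, Table.rowSat (ρ j) p.1 := by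
    intro j hj
    obtain ⟨p, hp, hsat⟩ := hNDT'.2.2.2.1 (ρ j) (hρmem j (Finset.mem_range.mp hj))
    exact ⟨p, hpaths_eq ▸ hp, hsat⟩
  have H2 : ∀ p ∈ (Γ'.sub i0).paths, ∀ j ∈ Finset.range m,
      Table.rowSat (ρ j) p.1 → p.2 = j := by
    intro p hp j hj hsat
    have hj' := Finset.mem_range.mp hj
    have hpΓ : p ∈ Γ'.paths := hpaths_eq.symm ▸ hp
    have hmemA : ρ j ∈ (Q.applyWord p.1).rows := Finset.mem_filter.mpr ⟨hρmem j hj', hsat⟩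
    rcases hNDT'.2.2.2.2 p hpΓ with hemp | hcommon
    · rw [hemp] at hmemA
      exact absurd hmemA (Finset.notMem_empty _)
    · exact hρdec j hj' p.2 (hcommon (ρ j) hmemA)
  obtain ⟨p, hpP, hplen⟩ := keyInd m a δ ρ hρother (Γ'.sub i0) (hdet' i0) hattr0
    (Finset.range m) (fun j hj => Finset.mem_range.mp hj) H1 H2
  have hlen : m - 1 ≤ p.1.length := by
    rw [Finset.card_range] at hplen
    exact hplen
  have hbddΓ' : BddAbove {c | ∃ p ∈ Γ'.paths, ψ.toPBCM.onWord p.1 = c} := by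
    have him : {c | ∃ p ∈ Γ'.paths, ψ.toPBCM.onWord p.1 = c} =
        (fun p : List (ℕ × ℕ) × ℕ => ψ.toPBCM.onWord p.1) '' Γ'.paths := rfl
    rw [him]
    exact ((KTree.paths_finite' Γ').image _).bddAbove
  have hcompΓ' : m - 1 ≤ treeComp ψ.toPBCM Γ' := by
    have hmem : ψ.toPBCM.onWord p.1 ∈ {c | ∃ p ∈ Γ'.paths, ψ.toPBCM.onWord p.1 = c} :=
      ⟨p, hpaths_eq.symm ▸ hpP, rfl⟩
    refine le_trans ?_ (le_csSup hbddΓ' hmem)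
    calc m - 1 ≤ p.1.length := hlen
      _ = (p.1.map Prod.fst).length := (List.length_map _).symm
      _ ≤ ψ.toFun (p.1.map Prod.fst) := ψ.bdd _
      _ = ψ.toPBCM.onWord p.1 := rfl
  have hpsiD : m - 1 ≤ psiD ψ.toPBCM Q := by
    have h' : treeComp ψ.toPBCM Γ' = psiD ψ.toPBCM Q := hΓ'c
    rw [← h']
    exact hcompΓ'
  have hHmem : psiD ψ.toPBCM Q ∈ HSet ψ.toPBCM A n := ⟨Q, hQA, hpsiA, rfl⟩
  exact le_trans hpsiD (le_csSup hH.bddAbove hHmem)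

end

/-- **Lemma (7M12).** If `H^∞_{ψ,A}` is everywhere defined then, for every `n`, `G_{ψ,A}(n)`
is defined and `H^∞_{ψ,A}(n) ≥ G_{ψ,A}(n) − 1`. -/
theorem stmt18 (A : Set (Table 2)) (hclosed : IsClosedClass A)
    (hnontriv : NontrivialClass A) (ψ : BCM)
    (hH : ∀ n, (HSet ψ.toPBCM A n).Finite) :
    ∀ n, (GSet ψ.toPBCM A n).Finite ∧
      Gfun ψ.toPBCM A n - 1 ≤ Hfun ψ.toPBCM A n := by
  intro n
  have claim : ∀ g ∈ GSet ψ.toPBCM A n, g ≤ Hfun ψ.toPBCM A n + 1 := by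
    rintro g ⟨T, hTA, hmT, rfl⟩
    by_cases hg : Gt T ≤ 1
    · omega
    · push_neg at hg
      obtain ⟨α, hα, hlen⟩ := Gt_attained (T := T) (by omega)
      have h2 : 2 ≤ α.length := by omega
      have := crux A hclosed ψ n (hH n) T hTA hmT α hα h2
      omega
  constructor
  · exact Set.Finite.subset (Set.finite_Iic (Hfun ψ.toPBCM A n + 1))
      (fun g hg => Set.mem_Iic.mpr (claim g hg))
  · have hle : Gfun ψ.toPBCM A n ≤ Hfun ψ.toPBCM A n + 1 :=
      csSup_le' fun g hg => claim g hg
    omega
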